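/- Let G₁ and G₂ be simple graphs with γ(G₁) ≥ 3 and γ(G₂) ≥ 3, and suppose G₁ and G₂ are connected. Let D_s = {v₁, v₂} and D_t = {w₁, w₂} be dominating sets of G₁ + G₂ with v₁, w₁ ∈ V(G₁) and v₂, w₂ ∈ V(G₂). Then D_s can be reconfigured into D_t by token sliding: there is a sequence of dominating sets of size 2 starting at D_s and ending at D_t, in which consecutive sets differ by replacing one vertex with an adjacent one. -/

import Mathlib

def MDominates {V : Type*} (G : SimpleGraph V) (D : Multiset V) : Prop :=
  ∀ v : V, ∃ d ∈ D, d = v ∨ G.Adj d v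

/-- One token-sliding step between dominating multisets: slide one token along an edge. -/
def TSStep {V : Type*} [DecidableEq V] (G : SimpleGraph V) (D D' : Multiset V) : Prop :=
  MDominates G D ∧ MDominates G D' ∧
    ∃ u v : V, G.Adj u v ∧ u ∈ D ∧ D' = v ::ₘ D.erase u

/-- The join of two graphs: disjoint union plus all edges between the parts. -/
def joinGraph {V₁ V₂ : Type*} (G₁ : SimpleGraph V₁) (G₂ : SimpleGraph V₂) :
    SimpleGraph (V₁ ⊕ V₂) where
  Adj x y :=
    match x, y with
    | Sum.inl a, Sum.inl b => G₁.Adj a b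
    | Sum.inr a, Sum.inr b => G₂.Adj a b
    | Sum.inl _, Sum.inr _ => True
    | Sum.inr _, Sum.inl _ => True
  symm := ⟨by rintro (a | a) (b | b) h <;> simp_all <;> exact h.symm⟩
  loopless := ⟨by rintro (a | a) h <;> simp_all⟩

noncomputable def dominationNumber (V : Type*) [Fintype V] (G : SimpleGraph V) : ℕ :=
  sInf {n : ℕ | ∃ D : Finset V, (∀ v : V, ∃ d ∈ D, d = v ∨ G.Adj d v) ∧ D.card = n}

lemma mixed_dominates {V₁ V₂ : Type*} (G₁ : SimpleGraph V₁) (G₂ : SimpleGraph V₂)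
    (a : V₁) (b : V₂) : MDominates (joinGraph G₁ G₂) {Sum.inl a, Sum.inr b} := by
  rintro (x | x)
  · exact ⟨Sum.inr b, by simp, Or.inr trivial⟩
  · exact ⟨Sum.inl a, by simp, Or.inr trivial⟩

lemma left_slide {V₁ V₂ : Type*} [DecidableEq V₁] [DecidableEq V₂]
    (G₁ : SimpleGraph V₁) (G₂ : SimpleGraph V₂) {a a' : V₁} (b : V₂)
    (h : G₁.Adj a a') :
    TSStep (joinGraph G₁ G₂) {Sum.inl a, Sum.inr b} {Sum.inl a', Sum.inr b} := by
  refine ⟨mixed_dominates G₁ G₂ a b, mixed_dominates G₁ G₂ a' b,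
    Sum.inl a, Sum.inl a', h, by simp, ?_⟩
  simp [Multiset.insert_eq_cons]

lemma right_slide {V₁ V₂ : Type*} [DecidableEq V₁] [DecidableEq V₂]
    (G₁ : SimpleGraph V₁) (G₂ : SimpleGraph V₂) (a : V₁) {b b' : V₂}
    (h : G₂.Adj b b') :
    TSStep (joinGraph G₁ G₂) {Sum.inl a, Sum.inr b} {Sum.inl a, Sum.inr b'} := by
  refine ⟨mixed_dominates G₁ G₂ a b, mixed_dominates G₁ G₂ a b',
    Sum.inr b, Sum.inr b', h, by simp, ?_⟩
  simp [Multiset.insert_eq_cons]; exact Multiset.cons_swap _ _ _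

lemma left_reach {V₁ V₂ : Type*} [DecidableEq V₁] [DecidableEq V₂]
    (G₁ : SimpleGraph V₁) (G₂ : SimpleGraph V₂) {a a' : V₁} (b : V₂)
    (h : G₁.Reachable a a') :
    Relation.ReflTransGen (TSStep (joinGraph G₁ G₂))
      {Sum.inl a, Sum.inr b} {Sum.inl a', Sum.inr b} := by
  obtain ⟨p⟩ := h
  induction p with
  | nil => exact Relation.ReflTransGen.refl
  | cons h p ih => exact Relation.ReflTransGen.head (left_slide G₁ G₂ b h) ih

lemma right_reach {V₁ V₂ : Type*} [DecidableEq V₁] [DecidableEq V₂]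
    (G₁ : SimpleGraph V₁) (G₂ : SimpleGraph V₂) (a : V₁) {b b' : V₂}
    (h : G₂.Reachable b b') :
    Relation.ReflTransGen (TSStep (joinGraph G₁ G₂))
      {Sum.inl a, Sum.inr b} {Sum.inl a, Sum.inr b'} := by
  obtain ⟨p⟩ := h
  induction p with
  | nil => exact Relation.ReflTransGen.refl
  | cons h p ih => exact Relation.ReflTransGen.head (right_slide G₁ G₂ a h) ih

theorem join_connected_reconf
    {V₁ V₂ : Type*} [DecidableEq V₁] [DecidableEq V₂] [Fintype V₁] [Fintype V₂]
    (G₁ : SimpleGraph V₁) (G₂ : SimpleGraph V₂)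
    (h₁ : 3 ≤ dominationNumber V₁ G₁) (h₂ : 3 ≤ dominationNumber V₂ G₂)
    (hc₁ : G₁.Connected) (hc₂ : G₂.Connected)
    (v₁ w₁ : V₁) (v₂ w₂ : V₂)
    (hs : MDominates (joinGraph G₁ G₂) {Sum.inl v₁, Sum.inr v₂})
    (ht : MDominates (joinGraph G₁ G₂) {Sum.inl w₁, Sum.inr w₂}) :
    Relation.ReflTransGen (TSStep (joinGraph G₁ G₂))
      {Sum.inl v₁, Sum.inr v₂} {Sum.inl w₁, Sum.inr w₂} := by
  exact (left_reach G₁ G₂ v₂ (hc₁ v₁ w₁)).trans (right_reach G₁ G₂ w₁ (hc₂ v₂ w₂))
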